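/- Let S = {(a_r, b_r) : r = 1,…,d} be a set of lattice directions, where for each r one defines f_{(a_r,b_r)}(x,y) = x^{a_r} y^{b_r} − 1 if b_r > 0, f_{(a_r,b_r)}(x,y) = x^{a_r} − y^{−b_r} if b_r < 0, f_{(1,0)} = x − 1, f_{(0,1)} = y − 1. If some b_r < 0, then the product F_S(x,y) = ∏_r f_{(a_r,b_r)}(x,y) contains a nonzero monomial of the form α·y^j for some j ∈ ℕ and α ≠ 0; hence in all cases the lattice set associated to F_S intersects the y-axis. -/

import Mathlib

open MvPolynomial

/-- The binomial associated to a lattice direction `(a,b)` with `a ≥ 0`: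
`x^a y^b - 1` if `b ≥ 0`, and `x^a - y^{-b}` if `b < 0`. -/
noncomputable def dirPoly (a b : ℤ) : MvPolynomial (Fin 2) ℤ :=
  if 0 ≤ b then X 0 ^ a.toNat * X 1 ^ b.toNat - 1
  else X 0 ^ a.toNat - X 1 ^ (-b).toNat

noncomputable def phiY : MvPolynomial (Fin 2) ℤ →+* Polynomial ℤ :=
  eval₂Hom Polynomial.C ![0, Polynomial.X]

lemma coeff_phiY (p : MvPolynomial (Fin 2) ℤ) (j : ℕ) :
    (phiY p).coeff j = MvPolynomial.coeff (Finsupp.single 1 j) p := by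
  induction p using MvPolynomial.induction_on' with
  | add p q hp hq => simp [map_add, Polynomial.coeff_add, hp, hq, MvPolynomial.coeff_add]
  | monomial m c =>
    rw [phiY, eval₂Hom_monomial]
    rw [Finsupp.prod_fintype _ _ (fun i => pow_zero _), Fin.prod_univ_two]
    simp only [Matrix.cons_val_zero, Matrix.cons_val_one, Matrix.head_cons]
    by_cases h0 : m 0 = 0
    · rw [h0, pow_zero, one_mul]
      rw [Polynomial.coeff_C_mul, Polynomial.coeff_X_pow, MvPolynomial.coeff_monomial]
      have : (m = Finsupp.single 1 j) ↔ (m 1 = j) := by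
        constructor
        · intro h; rw [h]; simp
        · intro h
          ext i
          match i with
          | 0 => simp [h0]
          | 1 => simp [h]
      by_cases h1 : m 1 = j
      · simp [h1, this]
      · simp [h1, this, Ne.symm h1]
    · rw [zero_pow h0, zero_mul, mul_zero, Polynomial.coeff_zero,
        MvPolynomial.coeff_monomial, if_neg, eq_comm]
      intro h
      apply h0
      rw [h]
      simp

lemma phiY_dirPoly_ne (a b : ℤ) (ha : 0 ≤ a) (ha0 : a = 0 → b = 1) :
    phiY (dirPoly a b) ≠ 0 := by
  unfold dirPoly
  by_cases hb : 0 ≤ b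
  · rw [if_pos hb]
    by_cases hA : a = 0
    · have hb1 : b = 1 := ha0 hA
      subst hA hb1
      simp only [map_sub, map_mul, map_pow, map_one, phiY, eval₂Hom_X',
        Matrix.cons_val_zero, Matrix.cons_val_one, Matrix.head_cons,
        Int.toNat_zero, Int.toNat_one, pow_zero, pow_one, one_mul]
      intro h
      have := congrArg (fun p => Polynomial.coeff p 1) h
      simp [Polynomial.coeff_one] at this
    · have hA' : a.toNat ≠ 0 := by omega
      simp only [map_sub, map_mul, map_pow, map_one, phiY, eval₂Hom_X',
        Matrix.cons_val_zero, Matrix.cons_val_one, Matrix.head_cons,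
        zero_pow hA', zero_mul]
      intro h
      have := congrArg (fun p => Polynomial.coeff p 0) h
      simp at this
  · rw [if_neg hb]
    have hA' : a.toNat ≠ 0 := by
      intro h
      have : a = 0 := by omega
      have := ha0 this
      omega
    simp only [map_sub, map_pow, phiY, eval₂Hom_X',
      Matrix.cons_val_zero, Matrix.cons_val_one, Matrix.head_cons,
      zero_pow hA', zero_sub, ne_eq, neg_eq_zero]
    exact pow_ne_zero _ Polynomial.X_ne_zero


/-- If some direction has `b_r < 0`, then `F_S = ∏_r f_{(a_r,b_r)}`
contains a nonzero monomial of the form `α·y^j`; hence in all cases the lattice set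
associated to `F_S` intersects the `y`-axis. -/
theorem stmt3 (d : ℕ) (dir : Fin d → ℤ × ℤ)
    (ha : ∀ r, 0 ≤ (dir r).1)
    (hcop : ∀ r, IsCoprime (dir r).1 (dir r).2)
    (hb0 : ∀ r, (dir r).2 = 0 → (dir r).1 = 1)
    (ha0 : ∀ r, (dir r).1 = 0 → (dir r).2 = 1) :
    ((∃ r, (dir r).2 < 0) →
      ∃ j : ℕ, MvPolynomial.coeff (Finsupp.single 1 j)
        (∏ r, dirPoly (dir r).1 (dir r).2) ≠ 0) ∧
    (∃ j : ℕ, MvPolynomial.coeff (Finsupp.single 1 j)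
        (∏ r, dirPoly (dir r).1 (dir r).2) ≠ 0) := by
  have key : ∃ j : ℕ, MvPolynomial.coeff (Finsupp.single 1 j)
      (∏ r, dirPoly (dir r).1 (dir r).2) ≠ 0 := by
    have hne : phiY (∏ r, dirPoly (dir r).1 (dir r).2) ≠ 0 := by
      rw [map_prod]
      exact Finset.prod_ne_zero_iff.mpr fun r _ =>
        phiY_dirPoly_ne _ _ (ha r) (ha0 r)
    by_contra h
    push_neg at h
    apply hne
    ext j
    rw [coeff_phiY]
    simpa using h j
  exact ⟨fun _ => key, key⟩
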